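/- Let T be a bounded operator on a reproducing kernel Hilbert space H over Ω, p ≥ 1, and define c̃(T) := inf_{λ∈Ω} |⟨T k̂_λ, k̂_λ⟩|. For any mean σ_μ monotone in each argument, sup_λ (|⟨T k̂_λ, k̂_λ⟩|^p σ_μ ‖T k̂_λ‖^p) ≥ max{ ber(T)^p σ_μ c̃(T*T)^{p/2}, c̃(T)^p σ_μ ‖T‖_ber^p }. -/
import Mathlib


open scoped InnerProductSpace
open ContinuousLinearMap

/-- Lower bound for the `σ_μ`-Berezin quantity:
`sup_λ σ(|⟨T k̂_λ, k̂_λ⟩|^p, ‖T k̂_λ‖^p) ≥ max{σ(ber(T)^p, c̃(T*T)^{p/2}), σ(c̃(T)^p, ‖T‖_ber^p)}`. -/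
theorem stmt_8 {H : Type*} [NormedAddCommGroup H] [InnerProductSpace ℂ H] [CompleteSpace H]
    {Ω : Type*} [Nonempty Ω] (khat : Ω → H) (hk : ∀ l : Ω, ‖khat l‖ = 1)
    (T : H →L[ℂ] H) (p : ℝ) (hp : 1 ≤ p) (σ : ℝ → ℝ → ℝ)
    (hσ : ∀ a b c d : ℝ, a ≤ c → b ≤ d → σ a b ≤ σ c d)
    (hσc : Continuous fun q : ℝ × ℝ => σ q.1 q.2) :
    max (σ ((⨆ l : Ω, ‖⟪T (khat l), khat l⟫_ℂ‖) ^ p)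
          ((⨅ l : Ω, ‖⟪(adjoint T ∘L T) (khat l), khat l⟫_ℂ‖) ^ (p / 2)))
        (σ ((⨅ l : Ω, ‖⟪T (khat l), khat l⟫_ℂ‖) ^ p) ((⨆ l : Ω, ‖T (khat l)‖) ^ p))
      ≤ ⨆ l : Ω, σ (‖⟪T (khat l), khat l⟫_ℂ‖ ^ p) (‖T (khat l)‖ ^ p) := by
  classical
  set f : Ω → ℝ := fun l => ‖⟪T (khat l), khat l⟫_ℂ‖ with hfdef
  set g : Ω → ℝ := fun l => ‖T (khat l)‖ with hgdef
  have hp0 : (0:ℝ) < p := lt_of_lt_of_le one_pos hp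
  have hf0 : ∀ l, 0 ≤ f l := fun l => norm_nonneg _
  have hg0 : ∀ l, 0 ≤ g l := fun l => norm_nonneg _
  have hfg : ∀ l, f l ≤ g l := by
    intro l
    calc f l ≤ ‖T (khat l)‖ * ‖khat l‖ := norm_inner_le_norm _ _
      _ = g l := by rw [hk]; ring
  have hgT : ∀ l, g l ≤ ‖T‖ := fun l => by
    calc g l ≤ ‖T‖ * ‖khat l‖ := T.le_opNorm _
      _ = ‖T‖ := by rw [hk, mul_one]
  have hbddf : BddAbove (Set.range f) :=
    ⟨‖T‖, by rintro x ⟨l, rfl⟩; exact (hfg l).trans (hgT l)⟩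
  have hbddg : BddAbove (Set.range g) :=
    ⟨‖T‖, by rintro x ⟨l, rfl⟩; exact hgT l⟩
  set A : ℝ := ⨆ l, f l with hA
  set a : ℝ := ⨅ l, f l with ha
  set B : ℝ := ⨆ l, g l with hB
  set b : ℝ := ⨅ l, g l with hb
  obtain ⟨l₀⟩ := ‹Nonempty Ω›
  have hA0 : 0 ≤ A := le_trans (hf0 l₀) (le_ciSup hbddf l₀)
  have ha0 : 0 ≤ a := le_ciInf hf0
  have hB0 : 0 ≤ B := le_trans (hg0 l₀) (le_ciSup hbddg l₀)
  have hb0 : 0 ≤ b := le_ciInf hg0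
  have hbA : b ≤ B := le_trans (ciInf_le ⟨0, by rintro x ⟨l, rfl⟩; exact hg0 l⟩ l₀)
    (le_ciSup hbddg l₀)
  -- the inner product with T*T gives the norm squared
  have hTT : ∀ l, ‖⟪(adjoint T ∘L T) (khat l), khat l⟫_ℂ‖ = g l ^ (2:ℕ) := by
    intro l
    rw [ContinuousLinearMap.comp_apply, ContinuousLinearMap.adjoint_inner_left,
      inner_self_eq_norm_sq_to_K]
    simp [hgdef]
  -- infimum of squares
  have hsq_mono : Monotone (fun x : ℝ => max x 0 ^ (2:ℕ)) := fun x y h =>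
    pow_le_pow_left₀ (le_max_right _ _) (max_le_max h le_rfl) 2
  have hsq_cont : Continuous (fun x : ℝ => max x 0 ^ (2:ℕ)) :=
    (continuous_id.max continuous_const).pow 2
  have hinf2 : (⨅ l, ‖⟪(adjoint T ∘L T) (khat l), khat l⟫_ℂ‖) = b ^ (2:ℕ) := by
    have : (⨅ l, ‖⟪(adjoint T ∘L T) (khat l), khat l⟫_ℂ‖) = ⨅ l, g l ^ (2:ℕ) := by
      exact iInf_congr hTT
    rw [this]
    have := hsq_mono.map_ciInf_of_continuousAt (f := fun x : ℝ => max x 0 ^ (2:ℕ))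
      (g := g) (hsq_cont.continuousAt) ⟨0, by rintro x ⟨l, rfl⟩; exact hg0 l⟩
    rw [← hb] at this
    calc (⨅ l, g l ^ (2:ℕ)) = ⨅ l, max (g l) 0 ^ (2:ℕ) :=
          iInf_congr fun l => by rw [max_eq_left (hg0 l)]
      _ = max b 0 ^ (2:ℕ) := this.symm
      _ = b ^ (2:ℕ) := by rw [max_eq_left hb0]
  have hinf2p : (⨅ l, ‖⟪(adjoint T ∘L T) (khat l), khat l⟫_ℂ‖) ^ (p / 2) = b ^ p := by
    rw [hinf2]
    rw [← Real.rpow_natCast b 2, ← Real.rpow_mul hb0]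
    congr 1
    ring
  rw [hinf2p]
  set S : ℝ := ⨆ l, σ (f l ^ p) (g l ^ p) with hS
  have hSbdd : BddAbove (Set.range fun l => σ (f l ^ p) (g l ^ p)) := by
    refine ⟨σ (‖T‖ ^ p) (‖T‖ ^ p), ?_⟩
    rintro x ⟨l, rfl⟩
    exact hσ _ _ _ _ (Real.rpow_le_rpow (hf0 l) ((hfg l).trans (hgT l)) hp0.le)
      (Real.rpow_le_rpow (hg0 l) (hgT l) hp0.le)
  have rpow_cont : Continuous (fun x : ℝ => max x 0 ^ p) := by
    have h1 : Continuous (fun x : ℝ => x ^ p) :=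
      continuous_iff_continuousAt.mpr fun x => Real.continuousAt_rpow_const x p (Or.inr hp0.le)
    exact h1.comp (continuous_id.max continuous_const)
  -- Claim 1
  have claim1 : σ (A ^ p) (b ^ p) ≤ S := by
    set F : ℝ → ℝ := fun x => σ (max x 0 ^ p) (b ^ p) with hFdef
    have hFmono : Monotone F := fun x y h =>
      hσ _ _ _ _ (Real.rpow_le_rpow (le_max_right _ _) (max_le_max h le_rfl) hp0.le) le_rfl
    have hFcont : Continuous F := hσc.comp (rpow_cont.prodMk continuous_const)
    have h1 : F A = ⨆ l, F (f l) :=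
      hFmono.map_ciSup_of_continuousAt hFcont.continuousAt hbddf
    have h2 : σ (A ^ p) (b ^ p) = F A := by rw [hFdef]; simp [max_eq_left hA0]
    rw [h2, h1]
    refine ciSup_mono hSbdd fun l => ?_
    have hbg : b ≤ g l := ciInf_le ⟨0, by rintro x ⟨l, rfl⟩; exact hg0 l⟩ l
    simp only [hFdef, max_eq_left (hf0 l)]
    exact hσ _ _ _ _ le_rfl (Real.rpow_le_rpow hb0 hbg hp0.le)
  -- Claim 2
  have claim2 : σ (a ^ p) (B ^ p) ≤ S := by
    set G : ℝ → ℝ := fun y => σ (a ^ p) (max y 0 ^ p) with hGdef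
    have hGmono : Monotone G := fun x y h =>
      hσ _ _ _ _ le_rfl (Real.rpow_le_rpow (le_max_right _ _) (max_le_max h le_rfl) hp0.le)
    have hGcont : Continuous G := hσc.comp (continuous_const.prodMk rpow_cont)
    have h1 : G B = ⨆ l, G (g l) :=
      hGmono.map_ciSup_of_continuousAt hGcont.continuousAt hbddg
    have h2 : σ (a ^ p) (B ^ p) = G B := by rw [hGdef]; simp [max_eq_left hB0]
    rw [h2, h1]
    refine ciSup_mono hSbdd fun l => ?_
    have haf : a ≤ f l := ciInf_le ⟨0, by rintro x ⟨l, rfl⟩; exact hf0 l⟩ l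
    simp only [hGdef, max_eq_left (hg0 l)]
    exact hσ _ _ _ _ (Real.rpow_le_rpow ha0 haf hp0.le) le_rfl
  exact max_le claim1 claim2
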